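/- For any pair of clockwise (respectively counter-clockwise) empty black triangles in a given state of a planar or toric trinity, changing one of them to counter-clockwise (respectively clockwise) leaves the other one still empty with its original orientation; furthermore, changing both triangles results in the same state regardless of the order in which the two changes are performed. -/
import Mathlib


/-!  Combinatorial trinities, Tutte matchings (states), and clock moves,
following Hine and Kálmán, "Clock theorems for triangulated surfaces".

A trinity is encoded combinatorially: `Vertex` is the set of vertices, properly
colored by `vcol` with colors `Fin 3` (0 = red, 1 = green, 2 = blue); `White`
and `Black` are the sets of white and black triangles.  Each triangle has one
vertex of each color (`wvert`, `bvert`) and one edge of each color (the edge of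
color `c` being opposite the vertex of color `c`); across its edge of color `c`
a white triangle `w` meets the black triangle `wadj w c`, and a black triangle
`b` meets the white triangle `badj b c`.  The two triangles sharing an edge of
color `c` share their vertices of the other two colors (`bvert_wadj`).
A planar trinity carries a distinguished outer white triangle (`outer = some o`);
for a toric trinity `outer = none`. -/

structure Trinity where
  Vertex : Type
  White : Type
  Black : Type
  [vertexFintype : Fintype Vertex]
  [whiteFintype : Fintype White]
  [blackFintype : Fintype Black]
  [vertexDecEq : DecidableEq Vertex]
  [whiteDecEq : DecidableEq White]
  [blackDecEq : DecidableEq Black]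
  outer : Option White
  vcol : Vertex → Fin 3
  wvert : White → Fin 3 → Vertex
  bvert : Black → Fin 3 → Vertex
  wadj : White → Fin 3 → Black
  badj : Black → Fin 3 → White
  wvert_col : ∀ w c, vcol (wvert w c) = c
  bvert_col : ∀ b c, vcol (bvert b c) = c
  badj_wadj : ∀ w c, badj (wadj w c) c = w
  wadj_badj : ∀ b c, wadj (badj b c) c = b
  bvert_wadj : ∀ w c c', c' ≠ c → bvert (wadj w c) c' = wvert w c'

attribute [instance] Trinity.vertexFintype Trinity.whiteFintype Trinity.blackFintype
  Trinity.vertexDecEq Trinity.whiteDecEq Trinity.blackDecEq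

namespace Trinity

variable (T : Trinity)

/-- `w` is the outer white triangle. -/
def IsOuter (w : T.White) : Prop := T.outer = some w

instance : DecidablePred T.IsOuter := fun w => decidable_of_iff (T.outer = some w) Iff.rfl

/-- `v` is a root, i.e. a vertex of the outer white triangle (planar case). -/
def IsRoot (v : T.Vertex) : Prop := ∃ w, T.IsOuter w ∧ ∃ c, v = T.wvert w c

/-- A Tutte matching (state): a perfect matching between the non-outer white
triangles and incident non-root vertices.  (For a toric trinity, `IsOuter` and
`IsRoot` are empty conditions, so this is a perfect matching between all white
triangles and all vertices.)  The value on the outer white triangle, if any, is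
irrelevant and is normalized by `outer_spec`. -/
structure State where
  toFun : T.White → T.Vertex
  incident : ∀ w, ∃ c, toFun w = T.wvert w c
  injOn : ∀ w w', ¬ T.IsOuter w → ¬ T.IsOuter w' → toFun w = toFun w' → w = w'
  not_root : ∀ w, ¬ T.IsOuter w → ¬ T.IsRoot (toFun w)
  surj : ∀ v, ¬ T.IsRoot v → ∃ w, ¬ T.IsOuter w ∧ toFun w = v
  outer_spec : ∀ w, T.IsOuter w → toFun w = T.wvert w 0

namespace State

variable {T}

/-- The black triangle through which the arrow representing the match of the
white triangle `w` passes: the arrow of the match `(w, s w)` crosses the edge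
of `w` opposite the matched vertex `s w` (the edge of color `vcol (s w)`). -/
def arrowBlack (s : T.State) (w : T.White) : T.Black := T.wadj w (T.vcol (s.toFun w))

/-- The black triangle `b` is empty in the state `s`: no arrow passes through it. -/
def EmptyAt (s : T.State) (b : T.Black) : Prop :=
  ∀ w, ¬ T.IsOuter w → s.arrowBlack w ≠ b

/-- `b` is a clockwise empty black triangle of `s`:  it is empty and its three
vertices are matched with the three adjacent white triangles in the clockwise
rotational pattern. -/
def IsCW (s : T.State) (b : T.Black) : Prop :=
  s.EmptyAt b ∧ ∀ c, s.toFun (T.badj b c) = T.bvert b (c + 1)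

/-- `b` is a counter-clockwise empty black triangle of `s`. -/
def IsCCW (s : T.State) (b : T.Black) : Prop :=
  s.EmptyAt b ∧ ∀ c, s.toFun (T.badj b c) = T.bvert b (c + 2)

end State

/-- The basic clockwise move (clock move) about the empty black triangle `b`,
turning it from clockwise to counter-clockwise: `t` is obtained from `s` by
changing `b`. -/
def CWMoveAt (s t : T.State) (b : T.Black) : Prop :=
  s.IsCW b ∧ (∀ c, t.toFun (T.badj b c) = T.bvert b (c + 2)) ∧
    ∀ w, (∀ c, w ≠ T.badj b c) → t.toFun w = s.toFun w

/-- A walk in the state transition graph, recording for each step the black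
triangle about which the move is performed and the direction of the move
(`true` = clockwise, `false` = counter-clockwise). -/
inductive Walk : T.State → List (T.Black × Bool) → T.State → Prop
  | nil (s : T.State) : Walk s [] s
  | cw {s t u : T.State} {b : T.Black} {l : List (T.Black × Bool)} :
      T.CWMoveAt s t b → Walk t l u → Walk s ((b, true) :: l) u
  | ccw {s t u : T.State} {b : T.Black} {l : List (T.Black × Bool)} :
      T.CWMoveAt t s b → Walk t l u → Walk s ((b, false) :: l) u

/-- Two states lie in the same connected component of the state transition
graph. -/
def Reaches (s t : T.State) : Prop := ∃ l, T.Walk s l t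

/-- A walk consisting of clockwise moves only, about the listed black triangles. -/
def CWWalk (s : T.State) (l : List T.Black) (t : T.State) : Prop :=
  T.Walk s (l.map fun b => (b, true)) t

/-- A state is recurrent if some non-empty sequence of clockwise moves starts
and ends at it. -/
def Recurrent (s : T.State) : Prop := ∃ l : List T.Black, l ≠ [] ∧ T.CWWalk s l s

/-- `s` belongs to an acyclic component of the state transition graph: no state
in its component is recurrent. -/
def InAcyclic (s : T.State) : Prop := ∀ t, T.Reaches s t → ¬ T.Recurrent t

/-- Two white triangles sharing an adjacent black triangle. -/
def WAdj (w w' : T.White) : Prop := ∃ c c', T.wadj w c = T.wadj w' c'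

/-- Rotation (by one step, in the direction induced by the orientation) of the
white triangles around the vertex `v`. -/
def rotAt (v : T.Vertex) (w : T.White) : T.White :=
  T.badj (T.wadj w (T.vcol v + 1)) (T.vcol v + 2)

/-- The combinatorial data encode a closed connected oriented surface: the
triangles form a connected complex and the link of every vertex is a single
cycle of triangles. -/
def Surface : Prop :=
  (∀ w w' : T.White, Relation.ReflTransGen T.WAdj w w') ∧
  ∀ (v : T.Vertex) (w w' : T.White), T.wvert w (T.vcol v) = v → T.wvert w' (T.vcol v) = v →
    ∃ k : ℕ, (T.rotAt v)^[k] w = w'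

/-- A planar trinity: a trinity on the sphere (Euler characteristic 2) with a
distinguished outer white triangle. -/
def Planar : Prop :=
  T.Surface ∧ T.outer.isSome ∧ Fintype.card T.Vertex = Fintype.card T.White + 2

/-- A toric trinity: a trinity on the torus (Euler characteristic 0), with all
triangles and vertices taking part in matchings. -/
def Toric : Prop :=
  T.Surface ∧ T.outer = none ∧ Fintype.card T.Vertex = Fintype.card T.White

/-- The configuration of a general clock move: three white triangles `W 0, W 1,
W 2` and three vertices `u 0, u 1, u 2` (one of each color) such that `W c`
contains the vertices `u c'` for both colors `c' ≠ c`; the three edges of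
colors `c` of the triangles `W c` then form a closed triangle of edges through
the vertices `u`, bounding a disk on the side opposite to the whites.
(For the boundary of a black triangle `b` this recovers `W = T.badj b`,
`u = T.bvert b`.) -/
def CombConfig (W : Fin 3 → T.White) (u : Fin 3 → T.Vertex) : Prop :=
  ∀ c c' : Fin 3, c' ≠ c → T.wvert (W c) c' = u c'

/-- A general clockwise move from `s` to `t`: about some clock-move
configuration whose three (non-outer) white triangles are matched with its
three vertices, the matching is switched from the clockwise pattern to the
counter-clockwise one, all other matches being kept. -/
def CWMove (s t : T.State) : Prop :=
  ∃ (W : Fin 3 → T.White) (u : Fin 3 → T.Vertex),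
    T.CombConfig W u ∧ (∀ c, ¬ T.IsOuter (W c)) ∧
    (∀ c, s.toFun (W c) = u (c + 1)) ∧ (∀ c, t.toFun (W c) = u (c + 2)) ∧
    ∀ w, (∀ c, w ≠ W c) → t.toFun w = s.toFun w

/-- `P` exhibits the closed triangle of edges determined by the clock-move
configuration `W` as separating: `P` is a two-coloring of the triangles which
changes value exactly across the three edges of the configuration, the white
triangles `W c` being on the `P`-side. -/
def ConfigCut (W : Fin 3 → T.White) (P : T.White ⊕ T.Black → Prop) : Prop :=
  (∀ (w : T.White) (c : Fin 3), (∀ c₀, ¬ (w = W c₀ ∧ c = c₀)) →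
    (P (Sum.inl w) ↔ P (Sum.inr (T.wadj w c)))) ∧
  (∀ c, P (Sum.inl (W c))) ∧ (∀ c, ¬ P (Sum.inr (T.wadj (W c) c)))

/-- A trinity is irreducible if it is not the trinity `F` with a single black
and a single white triangle, and it is not a nontrivial connected sum; i.e.
every separating closed triangle of edges cuts off a single triangle. -/
def Irreducible : Prop :=
  1 < Fintype.card T.White ∧
  ∀ (W : Fin 3 → T.White) (u : Fin 3 → T.Vertex) (P : T.White ⊕ T.Black → Prop),
    T.CombConfig W u → T.ConfigCut W P →
      (∃ b : T.Black, ∀ x, ¬ P x ↔ x = Sum.inr b) ∨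
      (∃ w : T.White, ∀ x, P x ↔ x = Sum.inl w)

/-! ### The directed dual graphs `G_X^*`

For a color `X`, the vertices of the directed graph `G_X^*` are the vertices of
the trinity of color `X` and its directed edges are in natural bijection with
the white triangles: the white triangle `w` corresponds to the dual edge of its
edge of color `X`, directed from the vertex of color `X` of the adjacent black
triangle `wadj w X` (its tail) to the vertex of color `X` of `w` (its head).
The arrows of a state pointing to vertices of color `X` are edges of `G_X^*`. -/

/-- The head of the edge of `G_X^*` corresponding to the white triangle `w`. -/
def head (X : Fin 3) (w : T.White) : T.Vertex := T.wvert w X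

/-- The tail of the edge of `G_X^*` corresponding to the white triangle `w`. -/
def tail (X : Fin 3) (w : T.White) : T.Vertex := T.bvert (T.wadj w X) X

/-- One-step reachability in `G_X^*` along edges from the set `A`. -/
def ARel (X : Fin 3) (A : Finset T.White) (a b : T.Vertex) : Prop :=
  ∃ w ∈ A, T.tail X w = a ∧ T.head X w = b

/-- `A` is a spanning arborescence of `G_X^*`, rooted at the root of color `X`
(the vertex of color `X` of the outer triangle `o`): a spanning tree all of
whose edges point away from the root. -/
def IsArborescence (X : Fin 3) (o : T.White) (A : Finset T.White) : Prop :=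
  (∀ w ∈ A, T.head X w ≠ T.wvert o X) ∧
  (∀ v : T.Vertex, T.vcol v = X → v ≠ T.wvert o X → ∃! w, w ∈ A ∧ T.head X w = v) ∧
  (∀ v : T.Vertex, T.vcol v = X → Relation.ReflTransGen (T.ARel X A) (T.wvert o X) v)

/-- One step of the tour tracing (counter-clockwise) the boundary of a small
neighborhood of the spanning tree `A` in `G_X^*`.  A position of the tour is a
dart `(w, d)`: the edge `w` of `G_X^*` together with a direction (`true`:
towards the head, `false`: towards the tail).  From the end of the dart one
rotates to the next edge-end around the vertex; if that edge belongs to `A` it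
is traversed away from the vertex, and otherwise its end is crossed (recorded
by bouncing back towards the vertex). -/
def tourStep (X : Fin 3) (A : Finset T.White) : T.White × Bool → T.White × Bool :=
  fun p =>
    if p.2 then
      let w' := T.badj (T.wadj p.1 (X + 1)) X
      (w', decide (w' ∈ A))
    else
      let w' := T.badj (T.wadj p.1 X) (X + 2)
      (w', decide (w' ∉ A))

/-- The position of the edge `w` of `G_X^*` in the ordering `<_A` determined by
the spanning arborescence `A`: the first time the boundary tour of a
neighborhood of `A` (started on the outer white triangle `o`, i.e. at the dart
arriving at the root through `o`) travels along `w` (if `w ∈ A`) or crosses an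
end of `w` (if `w ∉ A`). -/
noncomputable def ordIdx (X : Fin 3) (o : T.White) (A : Finset T.White) (w : T.White) : ℕ :=
  sInf {k : ℕ | ((T.tourStep X A)^[k] (o, true)).1 = w}

/-- `A` is the clocked arborescence of `G_X^*`: the spanning arborescence such
that for every non-root vertex `y` of color `X`, the edge of `A` pointing to
`y` is smallest, with respect to the ordering `<_A`, among all edges of
`G_X^*` terminating at `y`. -/
def IsClocked (X : Fin 3) (o : T.White) (A : Finset T.White) : Prop :=
  T.IsArborescence X o A ∧
    ∀ w ∈ A, ∀ w' : T.White, w' ≠ w → T.head X w' = T.head X w →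
      T.ordIdx X o A w < T.ordIdx X o A w'

/-! ### Wreaths (toric trinities) -/

/-- A nonempty set `C` of edges of `G_R^*` forming a single (directed) cycle:
at every red vertex the in-degree and out-degree in `C` agree and are at most
one, and `C` is connected. -/
def IsDirCycle (C : Finset T.White) : Prop :=
  C.Nonempty ∧
  (∀ v : T.Vertex, T.vcol v = 0 →
    (C.filter fun w => T.head 0 w = v).card = (C.filter fun w => T.tail 0 w = v).card ∧
    (C.filter fun w => T.head 0 w = v).card ≤ 1) ∧
  ∀ w ∈ C, ∀ w' ∈ C,
    Relation.ReflTransGen (fun a b => a ∈ C ∧ b ∈ C ∧ T.head 0 a = T.tail 0 b) w w'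

/-- The cycle `C` of edges of `G_R^*` separates the surface: the faces of
`G_R^*` (which correspond to the green and blue vertices of the trinity) can be
two-colored so that the two faces adjacent along an edge of `G_R^*` (namely the
faces of the green and the blue endpoint of the crossed red edge) get the same
color exactly when the edge does not belong to `C`. -/
def SeparatingSet (C : Finset T.White) : Prop :=
  ∃ P : T.Vertex → Prop,
    (∀ w : T.White, w ∉ C → (P (T.wvert w 1) ↔ P (T.wvert w 2))) ∧
    ∀ w ∈ C, ¬ (P (T.wvert w 1) ↔ P (T.wvert w 2))

/-- A wreath: a set `W` of edges of the directed dual graph `G_R^*` such that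
every red vertex has exactly one edge of `W` pointing to it and the edges of
`W` form no separating cycle. -/
def IsWreath (W : Finset T.White) : Prop :=
  (∀ v : T.Vertex, T.vcol v = 0 → ∃! w, w ∈ W ∧ T.head 0 w = v) ∧
  ∀ C ⊆ W, T.IsDirCycle C → ¬ T.SeparatingSet C


end Trinity

theorem Trinity.State.ext' {T : Trinity} {s t : T.State} (h : s.toFun = t.toFun) : s = t := by
  cases s; cases t; cases h; rfl

/-- If `b ≠ b'` and both are matched in the same rotational pattern (offset `k`),
then their adjacent white triangles are pairwise distinct. -/
theorem Trinity.disj_badj {T : Trinity} {s : T.State} {b b' : T.Black} (hne : b ≠ b') (k : Fin 3)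
    (h : ∀ c, s.toFun (T.badj b c) = T.bvert b (c + k))
    (h' : ∀ c, s.toFun (T.badj b' c) = T.bvert b' (c + k)) :
    ∀ c c' : Fin 3, T.badj b c ≠ T.badj b' c' := by
  intro c c' heq
  have h1 := h c
  have h2 := h' c'
  rw [heq] at h1
  have hcol : c + k = c' + k := by
    have := congrArg T.vcol (h1.symm.trans h2)
    rwa [T.bvert_col, T.bvert_col] at this
  have hcc : c = c' := add_right_cancel hcol
  apply hne
  have := congrArg (fun x => T.wadj x c) heq
  simp only [hcc] at this ⊢
  simpa [T.wadj_badj] using this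


/-- Lemma 2.6.  For any pair of clockwise (respectively
counter-clockwise) empty black triangles in a given state, changing one of them
to counter-clockwise (respectively clockwise) leaves the other one still empty
with its original orientation; furthermore, changing both triangles results in
the same state regardless of the order in which the two changes are
performed. -/
theorem changing_empty_black_triangles_commutes
    (T : Trinity) (hpt : T.Planar ∨ T.Toric) (s : T.State)
    (b b' : T.Black) (hne : b ≠ b') :
    (∀ t, s.IsCW b → s.IsCW b' → T.CWMoveAt s t b → t.IsCW b') ∧
    (∀ t, s.IsCCW b → s.IsCCW b' → T.CWMoveAt t s b → t.IsCCW b') ∧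
    (∀ t₁ t₂ u₁ u₂, s.IsCW b → s.IsCW b' →
      T.CWMoveAt s t₁ b → T.CWMoveAt t₁ u₁ b' →
      T.CWMoveAt s t₂ b' → T.CWMoveAt t₂ u₂ b → u₁ = u₂) ∧
    (∀ t₁ t₂ u₁ u₂, s.IsCCW b → s.IsCCW b' →
      T.CWMoveAt t₁ s b → T.CWMoveAt u₁ t₁ b' →
      T.CWMoveAt t₂ s b' → T.CWMoveAt u₂ t₂ b → u₁ = u₂) := by
    clear hpt
    refine ⟨?_, ?_, ?_, ?_⟩
    · -- Part 1
      intro t hcw hcw' hmv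
      obtain ⟨_, ht, hkeep⟩ := hmv
      have hd := Trinity.disj_badj hne 1 hcw.2 hcw'.2
      constructor
      · intro w hw hab
        by_cases hwb : ∀ c, w ≠ T.badj b c
        · apply hcw'.1 w hw
          unfold Trinity.State.arrowBlack at hab ⊢
          rwa [hkeep w hwb] at hab
        · push_neg at hwb
          obtain ⟨c, hc⟩ := hwb
          subst hc
          have hthis : T.wadj (T.badj b c) (c + 2) = b' := by
            have := hab
            unfold Trinity.State.arrowBlack at this
            rwa [ht c, T.bvert_col] at this
          have h2 : T.badj b c = T.badj b' (c + 2) := by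
            have := congrArg (fun x => T.badj x (c + 2)) hthis
            simpa [T.badj_wadj] using this
          exact hd c (c + 2) h2
      · intro c
        rw [hkeep _ (fun c' hcontra => hd c' c hcontra.symm)]
        exact hcw'.2 c
    · -- Part 2
      intro t hccw hccw' hmv
      obtain ⟨htcw, ht, hkeep⟩ := hmv
      have hd := Trinity.disj_badj hne 2 hccw.2 hccw'.2
      constructor
      · intro w hw hab
        by_cases hwb : ∀ c, w ≠ T.badj b c
        · apply hccw'.1 w hw
          unfold Trinity.State.arrowBlack at hab ⊢
          rwa [← hkeep w hwb] at hab
        · push_neg at hwb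
          obtain ⟨c, hc⟩ := hwb
          subst hc
          have hthis : T.wadj (T.badj b c) (c + 1) = b' := by
            have := hab
            unfold Trinity.State.arrowBlack at this
            rwa [htcw.2 c, T.bvert_col] at this
          have h2 : T.badj b c = T.badj b' (c + 1) := by
            have := congrArg (fun x => T.badj x (c + 1)) hthis
            simpa [T.badj_wadj] using this
          exact hd c (c + 1) h2
      · intro c
        rw [← hkeep _ (fun c' hcontra => hd c' c hcontra.symm)]
        exact hccw'.2 c
    · -- Part 3
      intro t₁ t₂ u₁ u₂ hcw hcw' h1 h2 h3 h4
      have hd := Trinity.disj_badj hne 1 hcw.2 hcw'.2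
      apply Trinity.State.ext'
      funext w
      by_cases hb : ∃ c, w = T.badj b c
      · obtain ⟨c, rfl⟩ := hb
        rw [h2.2.2 _ (fun c' hcontra => hd c c' hcontra), h1.2.1 c, h4.2.1 c]
      · by_cases hb' : ∃ c, w = T.badj b' c
        · obtain ⟨c, rfl⟩ := hb'
          rw [h2.2.1 c, h4.2.2 _ (fun c' hcontra => hd c' c hcontra.symm), h3.2.1 c]
        · push_neg at hb hb'
          rw [h2.2.2 _ hb', h1.2.2 _ hb, h4.2.2 _ hb, h3.2.2 _ hb']
    · -- Part 4
      intro t₁ t₂ u₁ u₂ hccw hccw' h1 h2 h3 h4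
      have hd := Trinity.disj_badj hne 2 hccw.2 hccw'.2
      apply Trinity.State.ext'
      funext w
      by_cases hb : ∃ c, w = T.badj b c
      · obtain ⟨c, rfl⟩ := hb
        rw [← h2.2.2 _ (fun c' hcontra => hd c c' hcontra), h1.1.2 c, h4.1.2 c]
      · by_cases hb' : ∃ c, w = T.badj b' c
        · obtain ⟨c, rfl⟩ := hb'
          rw [h2.1.2 c, ← h4.2.2 _ (fun c' hcontra => hd c' c hcontra.symm), h3.1.2 c]
        · push_neg at hb hb'
          rw [← h2.2.2 _ hb', ← h1.2.2 _ hb, ← h4.2.2 _ hb, ← h3.2.2 _ hb']
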